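/- If h is a nondecreasing isotone function and ĥ is any bounded measurable function on a bounded interval J, then for every p ≥ 1 the rearranged estimate Φ(ĥ) is at least as close to h in L^p as ĥ is: ∫_J |Φ(ĥ) − h|^p ≤ ∫_J |ĥ − h|^p. -/

import Mathlib

open MeasureTheory

/-- `Ψ(f)(y) = ∫_{[a,b]} 1{f(v) ≤ y} dv`. -/
noncomputable def Psi (a b : ℝ) (f : ℝ → ℝ) (y : ℝ) : ℝ :=
  ∫ u in Set.Icc a b, Set.indicator {v : ℝ | f v ≤ y} (fun _ => (1 : ℝ)) u

/-- The increasing rearrangement `Φ(f)(u) = (Ψ f)⁻¹(u) = sup {y : Ψ(f)(y) ≤ u - a}`. -/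
noncomputable def Phi (a b : ℝ) (f : ℝ → ℝ) (u : ℝ) : ℝ :=
  sSup {y : ℝ | Psi a b f y ≤ u - a}

namespace RECloser

open Set

open scoped ENNReal

/-- distribution function of `g` on `[a,b]`. -/
noncomputable def F (a b : ℝ) (g : ℝ → ℝ) (t : ℝ) : ℝ :=
  (volume ({v | g v ≤ t} ∩ Set.Icc a b)).toReal

variable {a b C : ℝ} {g h : ℝ → ℝ}

lemma vol_ne_top (t : ℝ) : volume ({v | g v ≤ t} ∩ Set.Icc a b) ≠ ⊤ :=
  ((measure_mono inter_subset_right).trans_lt measure_Icc_lt_top).ne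

lemma F_nonneg (t : ℝ) : 0 ≤ F a b g t := ENNReal.toReal_nonneg

lemma F_mono : Monotone (F a b g) := fun s t hst =>
  ENNReal.toReal_le_toReal (vol_ne_top s) (vol_ne_top t) |>.mpr <|
    measure_mono (inter_subset_inter_left _ fun v hv => le_trans hv hst)

lemma F_ofReal (t : ℝ) :
    volume ({v | g v ≤ t} ∩ Set.Icc a b) = ENNReal.ofReal (F a b g t) :=
  (ENNReal.ofReal_toReal (vol_ne_top t)).symm

lemma F_le (hab : a ≤ b) (t : ℝ) : F a b g t ≤ b - a := by
  have h1 : volume ({v | g v ≤ t} ∩ Set.Icc a b) ≤ volume (Set.Icc a b) :=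
    measure_mono inter_subset_right
  rw [Real.volume_Icc] at h1
  have := ENNReal.toReal_mono ENNReal.ofReal_ne_top h1
  rwa [ENNReal.toReal_ofReal (sub_nonneg.mpr hab)] at this

lemma F_bot (hbdd : ∀ u ∈ Set.Icc a b, |g u| ≤ C) : F a b g (-C - 1) = 0 := by
  have : {v | g v ≤ -C - 1} ∩ Set.Icc a b = ∅ := by
    ext v
    simp only [Set.mem_inter_iff, Set.mem_setOf_eq, Set.mem_empty_iff_false, iff_false, not_and]
    intro hv hvI
    have := (abs_le.mp (hbdd v hvI)).1
    linarith
  simp [F, this]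

lemma F_top (hab : a ≤ b) (hbdd : ∀ u ∈ Set.Icc a b, |g u| ≤ C) {t : ℝ} (hCt : C ≤ t) :
    F a b g t = b - a := by
  have : {v | g v ≤ t} ∩ Set.Icc a b = Set.Icc a b := by
    apply Set.inter_eq_right.mpr
    intro v hv
    exact le_trans (abs_le.mp (hbdd v hv)).2 hCt
  rw [F, this, Real.volume_Icc, ENNReal.toReal_ofReal (sub_nonneg.mpr hab)]

lemma F_rc (hmeas : Measurable g) (t : ℝ) {ε : ℝ} (hε : 0 < ε) :
    ∃ y, t < y ∧ F a b g y < F a b g t + ε := by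
  set s : ℕ → Set ℝ := fun n => {v | g v ≤ t + ((n : ℝ) + 1)⁻¹} ∩ Set.Icc a b with hs
  have hsm : ∀ n, MeasurableSet (s n) := fun n =>
    (hmeas measurableSet_Iic).inter measurableSet_Icc
  have hanti : Antitone s := by
    intro n m hnm
    apply Set.inter_subset_inter_left
    intro v hv
    simp only [Set.mem_setOf_eq] at hv ⊢
    have hinv : ((m : ℝ) + 1)⁻¹ ≤ ((n : ℝ) + 1)⁻¹ := by
      apply inv_anti₀ (by positivity)
      exact_mod_cast Nat.succ_le_succ hnm
    linarith
  have hiInter : (⋂ n, s n) = {v | g v ≤ t} ∩ Set.Icc a b := by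
    apply Set.Subset.antisymm
    · intro v hv
      have hv0 := Set.mem_iInter.mp hv
      refine ⟨?_, (hv0 0).2⟩
      by_contra hgt
      simp only [Set.mem_setOf_eq] at hgt
      push_neg at hgt
      obtain ⟨n, hn⟩ := exists_nat_one_div_lt (sub_pos.mpr hgt)
      have := (hv0 n).1
      simp only [Set.mem_setOf_eq] at this
      rw [one_div] at hn
      linarith
    · intro v hv
      apply Set.mem_iInter.mpr
      intro n
      refine ⟨?_, hv.2⟩
      have hv1 : g v ≤ t := hv.1
      simp only [Set.mem_setOf_eq]
      exact le_trans hv1 (le_add_of_nonneg_right (by positivity))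
  have htend : Filter.Tendsto (fun n => volume (s n)) Filter.atTop
      (nhds (volume ({v | g v ≤ t} ∩ Set.Icc a b))) := by
    have := tendsto_measure_iInter_atTop (μ := volume)
      (fun n => (hsm n).nullMeasurableSet) hanti ⟨0, vol_ne_top _⟩
    rwa [hiInter] at this
  have htoReal : Filter.Tendsto (fun n => (volume (s n)).toReal) Filter.atTop
      (nhds (F a b g t)) := (ENNReal.tendsto_toReal (vol_ne_top t)).comp htend
  have hev : ∀ᶠ n in Filter.atTop, (volume (s n)).toReal < F a b g t + ε :=
    htoReal.eventually_lt_const (by linarith)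
  obtain ⟨n, hn⟩ := hev.exists
  refine ⟨t + ((n : ℝ) + 1)⁻¹, ?_, hn⟩
  have : (0:ℝ) < ((n : ℝ) + 1)⁻¹ := by positivity
  linarith

lemma sub_meas (hmeas : Measurable g) (y : ℝ) : MeasurableSet {v | g v ≤ y} :=
  measurableSet_le hmeas measurable_const

lemma Psi_eq (hmeas : Measurable g) (y : ℝ) : Psi a b g y = F a b g y := by
  rw [Psi, integral_indicator_const (1 : ℝ) (sub_meas hmeas y),
    measureReal_restrict_apply (sub_meas hmeas y), smul_eq_mul, mul_one]
  rfl

lemma S_eq (hmeas : Measurable g) (u : ℝ) :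
    {y : ℝ | Psi a b g y ≤ u - a} = {y : ℝ | F a b g y ≤ u - a} := by
  ext y; simp [Psi_eq hmeas]

lemma S_nonempty (hbdd : ∀ u ∈ Set.Icc a b, |g u| ≤ C) {u : ℝ} (hau : a ≤ u) :
    (-C - 1) ∈ {y : ℝ | F a b g y ≤ u - a} := by
  simp only [Set.mem_setOf_eq, F_bot hbdd]
  linarith

lemma S_bdd (hab : a ≤ b) (hbdd : ∀ u ∈ Set.Icc a b, |g u| ≤ C) {u : ℝ} (hub : u < b) :
    BddAbove {y : ℝ | F a b g y ≤ u - a} := by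
  refine ⟨C, fun y hy => ?_⟩
  simp only [Set.mem_setOf_eq] at hy
  by_contra hCy
  push_neg at hCy
  rw [F_top hab hbdd hCy.le] at hy
  linarith

lemma phi_lt (hmeas : Measurable g) (hbdd : ∀ u ∈ Set.Icc a b, |g u| ≤ C)
    {u t : ℝ} (hu : u ∈ Set.Ioo a b) (hlt : u - a < F a b g t) : Phi a b g u ≤ t := by
  rw [Phi, S_eq hmeas]
  apply csSup_le ⟨_, S_nonempty hbdd hu.1.le⟩
  intro y hy
  simp only [Set.mem_setOf_eq] at hy
  by_contra hty
  push_neg at hty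
  exact absurd (lt_of_lt_of_le hlt (le_trans (F_mono hty.le) hy)) (lt_irrefl _)

lemma phi_le_imp (hab : a ≤ b) (hmeas : Measurable g) (hbdd : ∀ u ∈ Set.Icc a b, |g u| ≤ C)
    {u t : ℝ} (hu : u ∈ Set.Ioo a b) (hP : Phi a b g u ≤ t) : u - a ≤ F a b g t := by
  by_contra hFt
  push_neg at hFt
  obtain ⟨y, hty, hFy⟩ := F_rc (a := a) (b := b) hmeas t (sub_pos.mpr hFt)
  have hyS : y ∈ {y : ℝ | F a b g y ≤ u - a} := by
    simp only [Set.mem_setOf_eq]; linarith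
  have : y ≤ Phi a b g u := by
    rw [Phi, S_eq hmeas]
    exact le_csSup (S_bdd hab hbdd hu.2) hyS
  linarith

lemma phi_le_C (hab : a ≤ b) (hmeas : Measurable g) (hbdd : ∀ u ∈ Set.Icc a b, |g u| ≤ C)
    {u : ℝ} (hu : u ∈ Set.Ico a b) : Phi a b g u ≤ C := by
  rw [Phi, S_eq hmeas]
  apply csSup_le ⟨_, S_nonempty hbdd hu.1⟩
  intro y hy
  simp only [Set.mem_setOf_eq] at hy
  by_contra hCy
  push_neg at hCy
  rw [F_top hab hbdd hCy.le] at hy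
  have := hu.2
  linarith

lemma phi_monoOn (hab : a ≤ b) (hmeas : Measurable g) (hbdd : ∀ u ∈ Set.Icc a b, |g u| ≤ C) :
    MonotoneOn (Phi a b g) (Set.Ico a b) := by
  intro u hu u' hu' huu'
  rw [Phi, Phi, S_eq hmeas, S_eq hmeas]
  apply csSup_le_csSup (S_bdd hab hbdd hu'.2) ⟨_, S_nonempty hbdd hu.1⟩
  intro y hy
  simp only [Set.mem_setOf_eq] at hy ⊢
  linarith

/-- globally monotone modification of `Phi a b g`. -/
noncomputable def Pg (a b C : ℝ) (g : ℝ → ℝ) (u : ℝ) : ℝ :=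
  if u < b then Phi a b g (max a u) else C + 2

lemma Pg_eq_phi {u : ℝ} (hu : u ∈ Set.Ioo a b) : Pg a b C g u = Phi a b g u := by
  rw [Pg, if_pos hu.2, max_eq_right hu.1.le]

lemma C_nonneg (hab : a ≤ b) (hbdd : ∀ u ∈ Set.Icc a b, |g u| ≤ C) : 0 ≤ C :=
  le_trans (abs_nonneg _) (hbdd a (Set.left_mem_Icc.mpr hab))

lemma Pg_mono (hab : a < b) (hmeas : Measurable g) (hbdd : ∀ u ∈ Set.Icc a b, |g u| ≤ C) :
    Monotone (Pg a b C g) := by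
  have hC := C_nonneg hab.le hbdd
  intro u u' huu'
  by_cases hu' : u' < b
  · have hu : u < b := lt_of_le_of_lt huu' hu'
    rw [Pg, Pg, if_pos hu, if_pos hu']
    exact phi_monoOn hab.le hmeas hbdd ⟨le_max_left _ _, max_lt hab hu⟩
      ⟨le_max_left _ _, max_lt hab hu'⟩ (max_le_max le_rfl huu')
  · rw [Pg, Pg, if_neg hu']
    by_cases hu : u < b
    · rw [if_pos hu]
      have := phi_le_C hab.le hmeas hbdd (u := max a u) ⟨le_max_left _ _, max_lt hab hu⟩
      linarith
    · rw [if_neg hu]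

lemma Pg_measurable (hab : a < b) (hmeas : Measurable g)
    (hbdd : ∀ u ∈ Set.Icc a b, |g u| ≤ C) : Measurable (Pg a b C g) :=
  (Pg_mono hab hmeas hbdd).measurable

/-- globally monotone modification of `h`. -/
noncomputable def Hc (a b : ℝ) (h : ℝ → ℝ) (u : ℝ) : ℝ :=
  h (max a (min u b))

lemma clamp_mem (hab : a ≤ b) (u : ℝ) : max a (min u b) ∈ Set.Icc a b :=
  ⟨le_max_left _ _, max_le hab (min_le_right _ _)⟩

lemma Hc_eq (hu : u ∈ Set.Icc a b) : Hc a b h u = h u := by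
  rw [Hc, min_eq_left hu.2, max_eq_right hu.1]

lemma Hc_mono (hab : a ≤ b) (hmono : MonotoneOn h (Set.Icc a b)) : Monotone (Hc a b h) := by
  intro u u' huu'
  exact hmono (clamp_mem hab u) (clamp_mem hab u')
    (max_le_max le_rfl (min_le_min huu' le_rfl))

lemma Hc_measurable (hab : a ≤ b) (hmono : MonotoneOn h (Set.Icc a b)) :
    Measurable (Hc a b h) := (Hc_mono hab hmono).measurable

lemma Hc_bdd (hab : a ≤ b) (hmono : MonotoneOn h (Set.Icc a b)) (u : ℝ) :
    |Hc a b h u| ≤ max |h a| |h b| :=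
  abs_le_max_abs_abs
    (hmono (Set.left_mem_Icc.mpr hab) (clamp_mem hab u) (le_max_left _ _))
    (hmono (clamp_mem hab u) (Set.right_mem_Icc.mpr hab) (clamp_mem hab u).2)

lemma restrict_Icc_eq : volume.restrict (Set.Icc a b) = volume.restrict (Set.Ioo a b) :=
  (Measure.restrict_congr_set Ioo_ae_eq_Icc).symm

lemma cancel_aux {w x x' y : ℝ≥0∞} (h1 : x ≤ x') (h2 : x' ≠ ⊤) (h3 : x' + w ≤ x + y) :
    w ≤ y := by
  have h4 : x' + w ≤ x' + y := le_trans h3 (add_le_add_left h1 y)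
  exact (ENNReal.add_le_add_iff_left h2).mp h4

lemma nu_sublevel (hmeas : Measurable g) (t : ℝ) :
    volume.restrict (Set.Ioo a b) {v | g v ≤ t} = ENNReal.ofReal (F a b g t) := by
  rw [← restrict_Icc_eq, Measure.restrict_apply (sub_meas hmeas t), F_ofReal]

lemma key1 (hab : a < b) (hmeas : Measurable g) (hbdd : ∀ u ∈ Set.Icc a b, |g u| ≤ C)
    (hmono : MonotoneOn h (Set.Icc a b)) (s t : ℝ) :
    volume.restrict (Set.Ioo a b) ({u | t < Pg a b C g u} ∩ {u | Hc a b h u ≤ s})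
      ≤ volume.restrict (Set.Ioo a b) ({u | t < g u} ∩ {u | Hc a b h u ≤ s}) := by
  set ν := volume.restrict (Set.Ioo a b) with hν
  set A := {u | Hc a b h u ≤ s} with hA
  have hameas : MeasurableSet A := measurableSet_le (Hc_measurable hab.le hmono) measurable_const
  have hXmeas : MeasurableSet {u | t < Pg a b C g u} :=
    measurableSet_lt measurable_const (Pg_measurable hab hmeas hbdd)
  by_cases hne : (A ∩ Set.Ioo a b).Nonempty
  · set e := sSup (A ∩ Set.Ioo a b) with he
    have hbddA : BddAbove (A ∩ Set.Ioo a b) := ⟨b, fun x hx => hx.2.2.le⟩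
    -- upper bound for the LHS
    have hsub1 : ({u | t < Pg a b C g u} ∩ A) ∩ Set.Ioo a b ⊆ Set.Icc (a + F a b g t) e := by
      rintro u ⟨⟨hPgu, hAu⟩, hIoo⟩
      constructor
      · by_contra hlt
        push_neg at hlt
        have h1 : u - a < F a b g t := by linarith
        have h2 := phi_lt hmeas hbdd hIoo h1
        have hPgu' : t < Pg a b C g u := hPgu
        rw [Pg_eq_phi hIoo] at hPgu'
        linarith
      · exact le_csSup hbddA ⟨hAu, hIoo⟩
    have hLHS : ν ({u | t < Pg a b C g u} ∩ A) ≤ ENNReal.ofReal (e - (a + F a b g t)) := by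
      rw [hν, Measure.restrict_apply (hXmeas.inter hameas)]
      calc volume (({u | t < Pg a b C g u} ∩ A) ∩ Set.Ioo a b)
          ≤ volume (Set.Icc (a + F a b g t) e) := measure_mono hsub1
        _ = ENNReal.ofReal (e - (a + F a b g t)) := Real.volume_Icc
    -- lower bound for ν A
    have hA_lb : ENNReal.ofReal (e - a) ≤ ν A := by
      have hsub2 : Set.Ioo a e ⊆ A ∩ Set.Ioo a b := by
        intro u hu
        obtain ⟨v, hv, huv⟩ := exists_lt_of_lt_csSup hne hu.2
        refine ⟨?_, ⟨hu.1, lt_trans huv hv.2.2⟩⟩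
        have : Hc a b h u ≤ Hc a b h v := Hc_mono hab.le hmono huv.le
        have hvA : Hc a b h v ≤ s := hv.1
        simp only [hA, Set.mem_setOf_eq]
        linarith
      rw [hν, Measure.restrict_apply hameas]
      calc ENNReal.ofReal (e - a) = volume (Set.Ioo a e) := Real.volume_Ioo.symm
        _ ≤ volume (A ∩ Set.Ioo a b) := measure_mono hsub2
    -- split ν A
    have hsplit : ν (A ∩ {u | g u ≤ t}) + ν (A ∩ {u | t < g u}) = ν A := by
      have := measure_inter_add_diff (μ := ν) A (sub_meas hmeas t)
      rwa [show A \ {u | g u ≤ t} = A ∩ {u | t < g u} by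
        ext u; simp [Set.mem_diff, Set.mem_setOf_eq, not_le, and_comm]] at this
    have hx : ν (A ∩ {u | g u ≤ t}) ≤ ENNReal.ofReal (F a b g t) := by
      rw [← nu_sublevel (a := a) (b := b) hmeas t]
      exact measure_mono inter_subset_right
    rcases le_or_gt (e - (a + F a b g t)) 0 with hcase | hcase
    · calc ν ({u | t < Pg a b C g u} ∩ A) ≤ ENNReal.ofReal (e - (a + F a b g t)) := hLHS
        _ = 0 := ENNReal.ofReal_eq_zero.mpr hcase
        _ ≤ _ := zero_le
    · have hkey : ENNReal.ofReal (F a b g t) + ENNReal.ofReal (e - (a + F a b g t))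
          = ENNReal.ofReal (e - a) := by
        rw [← ENNReal.ofReal_add (F_nonneg t) hcase.le]
        ring_nf
      have hmain : ENNReal.ofReal (e - (a + F a b g t)) ≤ ν (A ∩ {u | t < g u}) := by
        apply cancel_aux hx ENNReal.ofReal_ne_top
        rw [hkey]
        rw [hsplit]
        exact hA_lb
      calc ν ({u | t < Pg a b C g u} ∩ A) ≤ ENNReal.ofReal (e - (a + F a b g t)) := hLHS
        _ ≤ ν (A ∩ {u | t < g u}) := hmain
        _ = ν ({u | t < g u} ∩ A) := by rw [Set.inter_comm]
  · rw [Set.not_nonempty_iff_eq_empty] at hne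
    have : ν ({u | t < Pg a b C g u} ∩ A) = 0 := by
      rw [hν, Measure.restrict_apply (hXmeas.inter hameas)]
      refine measure_mono_null ?_ (measure_empty (μ := volume))
      rw [← hne]
      exact Set.inter_subset_inter_left _ inter_subset_right
    rw [this]
    exact zero_le

lemma key2 (hab : a < b) (hmeas : Measurable g) (hbdd : ∀ u ∈ Set.Icc a b, |g u| ≤ C)
    (hmono : MonotoneOn h (Set.Icc a b)) (s t : ℝ) :
    volume.restrict (Set.Ioo a b) ({u | Pg a b C g u ≤ t} ∩ {u | s < Hc a b h u})
      ≤ volume.restrict (Set.Ioo a b) ({u | g u ≤ t} ∩ {u | s < Hc a b h u}) := by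
  set ν := volume.restrict (Set.Ioo a b) with hν
  set A := {u | s < Hc a b h u} with hA
  have hameas : MeasurableSet A := measurableSet_lt measurable_const (Hc_measurable hab.le hmono)
  have hXmeas : MeasurableSet {u | Pg a b C g u ≤ t} :=
    measurableSet_le (Pg_measurable hab hmeas hbdd) measurable_const
  by_cases hne : (A ∩ Set.Ioo a b).Nonempty
  · set e := sInf (A ∩ Set.Ioo a b) with he
    have hbddA : BddBelow (A ∩ Set.Ioo a b) := ⟨a, fun x hx => hx.2.1.le⟩
    have hae : a ≤ e := le_csInf hne (fun x hx => hx.2.1.le)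
    have hsub1 : ({u | Pg a b C g u ≤ t} ∩ A) ∩ Set.Ioo a b ⊆ Set.Icc e (a + F a b g t) := by
      rintro u ⟨⟨hPgu, hAu⟩, hIoo⟩
      constructor
      · exact csInf_le hbddA ⟨hAu, hIoo⟩
      · have hPu : Phi a b g u ≤ t := by rw [← Pg_eq_phi hIoo]; exact hPgu
        have := phi_le_imp hab.le hmeas hbdd hIoo hPu
        linarith
    have hLHS : ν ({u | Pg a b C g u ≤ t} ∩ A) ≤ ENNReal.ofReal (a + F a b g t - e) := by
      rw [hν, Measure.restrict_apply (hXmeas.inter hameas)]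
      calc volume (({u | Pg a b C g u ≤ t} ∩ A) ∩ Set.Ioo a b)
          ≤ volume (Set.Icc e (a + F a b g t)) := measure_mono hsub1
        _ = ENNReal.ofReal (a + F a b g t - e) := Real.volume_Icc
    have hA_lb : ENNReal.ofReal (b - e) ≤ ν A := by
      have hsub2 : Set.Ioo e b ⊆ A ∩ Set.Ioo a b := by
        intro u hu
        obtain ⟨v, hv, huv⟩ := exists_lt_of_csInf_lt hne hu.1
        refine ⟨?_, ⟨lt_of_le_of_lt hae hu.1, hu.2⟩⟩
        have h1 : Hc a b h v ≤ Hc a b h u := Hc_mono hab.le hmono huv.le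
        have hvA : s < Hc a b h v := hv.1
        simp only [hA, Set.mem_setOf_eq]
        linarith
      rw [hν, Measure.restrict_apply hameas]
      calc ENNReal.ofReal (b - e) = volume (Set.Ioo e b) := Real.volume_Ioo.symm
        _ ≤ volume (A ∩ Set.Ioo a b) := measure_mono hsub2
    have hsplit : ν (A ∩ {u | g u ≤ t}) + ν (A ∩ {u | t < g u}) = ν A := by
      have := measure_inter_add_diff (μ := ν) A (sub_meas hmeas t)
      rwa [show A \ {u | g u ≤ t} = A ∩ {u | t < g u} by
        ext u; simp [Set.mem_diff, Set.mem_setOf_eq, not_le, and_comm]] at this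
    -- upper bound for ν {t < g}
    have h1 : ν {u | g u ≤ t} + ν {u | t < g u} = ν Set.univ := by
      have := measure_inter_add_diff (μ := ν) Set.univ (sub_meas hmeas t)
      rwa [Set.univ_inter, show Set.univ \ {u | g u ≤ t} = {u | t < g u} by
        ext u; simp [not_le]] at this
    have h3 : ν Set.univ = ENNReal.ofReal (b - a) := by
      rw [hν, Measure.restrict_apply_univ, Real.volume_Ioo]
    have h5 : ν {u | g u ≤ t} = ENNReal.ofReal (F a b g t) := by
      rw [hν]; exact nu_sublevel hmeas t
    have hcompl : ν {u | t < g u} + ENNReal.ofReal (F a b g t) = ENNReal.ofReal (b - a) := by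
      rw [← h5, add_comm, h1, h3]
    have hx : ν (A ∩ {u | t < g u}) ≤ ENNReal.ofReal (b - a - F a b g t) := by
      have h4 : ν {u | t < g u} ≤ ENNReal.ofReal (b - a - F a b g t) := by
        apply cancel_aux (le_refl (ENNReal.ofReal (F a b g t))) ENNReal.ofReal_ne_top
        have h6 : ENNReal.ofReal (F a b g t) + ENNReal.ofReal (b - a - F a b g t)
            = ENNReal.ofReal (b - a) := by
          rw [← ENNReal.ofReal_add (F_nonneg t)
            (by linarith [F_le (a := a) (b := b) (g := g) hab.le t])]
          ring_nf
        calc ENNReal.ofReal (F a b g t) + ν {u | t < g u} = ENNReal.ofReal (b - a) := by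
              rw [add_comm]; exact hcompl
          _ = ENNReal.ofReal (F a b g t) + ENNReal.ofReal (b - a - F a b g t) := h6.symm
          _ ≤ _ := le_refl _
      exact le_trans (measure_mono inter_subset_right) h4
    rcases le_or_gt (a + F a b g t - e) 0 with hcase | hcase
    · calc ν ({u | Pg a b C g u ≤ t} ∩ A) ≤ ENNReal.ofReal (a + F a b g t - e) := hLHS
        _ = 0 := ENNReal.ofReal_eq_zero.mpr hcase
        _ ≤ _ := zero_le
    · have hkey : ENNReal.ofReal (b - a - F a b g t) + ENNReal.ofReal (a + F a b g t - e)
          = ENNReal.ofReal (b - e) := by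
        rw [← ENNReal.ofReal_add (by linarith [F_le (a := a) (b := b) (g := g) hab.le t] :
          (0:ℝ) ≤ b - a - F a b g t) hcase.le]
        ring_nf
      have hmain : ENNReal.ofReal (a + F a b g t - e) ≤ ν (A ∩ {u | g u ≤ t}) := by
        apply cancel_aux hx ENNReal.ofReal_ne_top
        rw [hkey]
        calc ENNReal.ofReal (b - e) ≤ ν A := hA_lb
          _ = ν (A ∩ {u | g u ≤ t}) + ν (A ∩ {u | t < g u}) := hsplit.symm
          _ = ν (A ∩ {u | t < g u}) + ν (A ∩ {u | g u ≤ t}) := add_comm _ _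
      calc ν ({u | Pg a b C g u ≤ t} ∩ A) ≤ ENNReal.ofReal (a + F a b g t - e) := hLHS
        _ ≤ ν (A ∩ {u | g u ≤ t}) := hmain
        _ = ν ({u | g u ≤ t} ∩ A) := by rw [Set.inter_comm]
  · rw [Set.not_nonempty_iff_eq_empty] at hne
    have : ν ({u | Pg a b C g u ≤ t} ∩ A) = 0 := by
      rw [hν, Measure.restrict_apply (hXmeas.inter hameas)]
      refine measure_mono_null ?_ (measure_empty (μ := volume))
      rw [← hne]
      exact Set.inter_subset_inter_left _ inter_subset_right
    rw [this]
    exact zero_le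

/-- Layer-cake representation for `∫ (f₁ - f₂)₊`. -/
lemma layercake {f₁ f₂ : ℝ → ℝ} (h₁ : Measurable f₁) (h₂ : Measurable f₂) :
    ∫⁻ u, ENNReal.ofReal (f₁ u - f₂ u) ∂(volume.restrict (Set.Ioo a b))
      = ∫⁻ t, volume.restrict (Set.Ioo a b) ({u | t < f₁ u} ∩ {u | f₂ u ≤ t}) ∂volume := by
  set ν := volume.restrict (Set.Ioo a b) with hν
  have hE : MeasurableSet {p : ℝ × ℝ | f₂ p.1 ≤ p.2 ∧ p.2 < f₁ p.1} :=
    (measurableSet_le (h₂.comp measurable_fst) measurable_snd).inter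
      (measurableSet_lt measurable_snd (h₁.comp measurable_fst))
  have step1 : ∀ u, ENNReal.ofReal (f₁ u - f₂ u)
      = ∫⁻ t, {p : ℝ × ℝ | f₂ p.1 ≤ p.2 ∧ p.2 < f₁ p.1}.indicator 1 (u, t) ∂volume := by
    intro u
    have hset : (fun t => {p : ℝ × ℝ | f₂ p.1 ≤ p.2 ∧ p.2 < f₁ p.1}.indicator
        (1 : ℝ × ℝ → ℝ≥0∞) (u, t)) = (Set.Ico (f₂ u) (f₁ u)).indicator (1 : ℝ → ℝ≥0∞) := by
      ext t
      simp only [Set.indicator_apply, Set.mem_setOf_eq, Set.mem_Ico, Pi.one_apply]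
    rw [hset, lintegral_indicator_one measurableSet_Ico, Real.volume_Ico]
  have swap := lintegral_lintegral_swap (μ := ν) (ν := volume)
    (f := fun u t => {p : ℝ × ℝ | f₂ p.1 ≤ p.2 ∧ p.2 < f₁ p.1}.indicator 1 (u, t))
    ((measurable_one.indicator hE).aemeasurable)
  calc ∫⁻ u, ENNReal.ofReal (f₁ u - f₂ u) ∂ν
      = ∫⁻ u, ∫⁻ t, {p : ℝ × ℝ | f₂ p.1 ≤ p.2 ∧ p.2 < f₁ p.1}.indicator
          1 (u, t) ∂volume ∂ν := by
        apply lintegral_congr; intro u; exact step1 u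
    _ = ∫⁻ t, ∫⁻ u, {p : ℝ × ℝ | f₂ p.1 ≤ p.2 ∧ p.2 < f₁ p.1}.indicator
          1 (u, t) ∂ν ∂volume := swap
    _ = ∫⁻ t, ν ({u | t < f₁ u} ∩ {u | f₂ u ≤ t}) ∂volume := by
        apply lintegral_congr; intro t
        have hset : (fun u => {p : ℝ × ℝ | f₂ p.1 ≤ p.2 ∧ p.2 < f₁ p.1}.indicator
            (1 : ℝ × ℝ → ℝ≥0∞) (u, t))
            = ({u | t < f₁ u} ∩ {u | f₂ u ≤ t}).indicator (1 : ℝ → ℝ≥0∞) := by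
          ext u
          simp only [Set.indicator_apply, Set.mem_setOf_eq, Set.mem_inter_iff, Pi.one_apply,
            and_comm]
        rw [hset, lintegral_indicator_one
          ((measurableSet_lt measurable_const h₁).inter (measurableSet_le h₂ measurable_const))]

lemma contr_plus (hab : a < b) (hmeas : Measurable g)
    (hbdd : ∀ u ∈ Set.Icc a b, |g u| ≤ C) (hmono : MonotoneOn h (Set.Icc a b)) (c : ℝ) :
    ∫⁻ u, ENNReal.ofReal (Pg a b C g u - Hc a b h u - c) ∂(volume.restrict (Set.Ioo a b))
      ≤ ∫⁻ u, ENNReal.ofReal (g u - Hc a b h u - c) ∂(volume.restrict (Set.Ioo a b)) := by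
  have hHc := Hc_measurable hab.le hmono
  have hPg := Pg_measurable hab hmeas hbdd
  have e1 : ∫⁻ u, ENNReal.ofReal (Pg a b C g u - Hc a b h u - c)
      ∂(volume.restrict (Set.Ioo a b))
      = ∫⁻ t, volume.restrict (Set.Ioo a b)
        ({u | t < Pg a b C g u} ∩ {u | Hc a b h u ≤ t - c}) ∂volume := by
    have := layercake (a := a) (b := b) hPg (hHc.add_const c)
    simp only [sub_sub] at this ⊢
    rw [this]
    apply lintegral_congr; intro t
    congr 1
    ext u
    simp only [Set.mem_inter_iff, Set.mem_setOf_eq, le_sub_iff_add_le]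
  have e2 : ∫⁻ u, ENNReal.ofReal (g u - Hc a b h u - c) ∂(volume.restrict (Set.Ioo a b))
      = ∫⁻ t, volume.restrict (Set.Ioo a b)
        ({u | t < g u} ∩ {u | Hc a b h u ≤ t - c}) ∂volume := by
    have := layercake (a := a) (b := b) hmeas (hHc.add_const c)
    simp only [sub_sub] at this ⊢
    rw [this]
    apply lintegral_congr; intro t
    congr 1
    ext u
    simp only [Set.mem_inter_iff, Set.mem_setOf_eq, le_sub_iff_add_le]
  rw [e1, e2]
  exact lintegral_mono fun t => key1 hab hmeas hbdd hmono (t - c) t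

lemma contr_minus (hab : a < b) (hmeas : Measurable g)
    (hbdd : ∀ u ∈ Set.Icc a b, |g u| ≤ C) (hmono : MonotoneOn h (Set.Icc a b)) (c : ℝ) :
    ∫⁻ u, ENNReal.ofReal (Hc a b h u - Pg a b C g u - c) ∂(volume.restrict (Set.Ioo a b))
      ≤ ∫⁻ u, ENNReal.ofReal (Hc a b h u - g u - c) ∂(volume.restrict (Set.Ioo a b)) := by
  have hHc := Hc_measurable hab.le hmono
  have hPg := Pg_measurable hab hmeas hbdd
  have e1 : ∫⁻ u, ENNReal.ofReal (Hc a b h u - Pg a b C g u - c)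
      ∂(volume.restrict (Set.Ioo a b))
      = ∫⁻ t, volume.restrict (Set.Ioo a b)
        ({u | Pg a b C g u ≤ t} ∩ {u | t + c < Hc a b h u}) ∂volume := by
    have := layercake (a := a) (b := b) (hHc.sub (measurable_const : Measurable fun _ : ℝ => c)) hPg
    simp only [Pi.sub_apply, sub_right_comm] at this ⊢
    rw [this]
    apply lintegral_congr; intro t
    rw [Set.inter_comm]
    congr 1
    ext u
    simp only [Set.mem_setOf_eq, lt_sub_iff_add_lt]
  have e2 : ∫⁻ u, ENNReal.ofReal (Hc a b h u - g u - c) ∂(volume.restrict (Set.Ioo a b))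
      = ∫⁻ t, volume.restrict (Set.Ioo a b)
        ({u | g u ≤ t} ∩ {u | t + c < Hc a b h u}) ∂volume := by
    have := layercake (a := a) (b := b) (hHc.sub (measurable_const : Measurable fun _ : ℝ => c)) hmeas
    simp only [Pi.sub_apply, sub_right_comm] at this ⊢
    rw [this]
    apply lintegral_congr; intro t
    rw [Set.inter_comm]
    congr 1
    ext u
    simp only [Set.mem_setOf_eq, lt_sub_iff_add_lt]
  rw [e1, e2]
  exact lintegral_mono fun t => key2 hab hmeas hbdd hmono (t + c) t

lemma ofReal_abs_split {x y c : ℝ} (hc : 0 ≤ c) :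
    ENNReal.ofReal (|x - y| - c) = ENNReal.ofReal (x - y - c) + ENNReal.ofReal (y - x - c) := by
  rcases le_total x y with hxy | hxy
  · have h1 : ENNReal.ofReal (x - y - c) = 0 := ENNReal.ofReal_of_nonpos (by linarith)
    rw [abs_of_nonpos (sub_nonpos.mpr hxy), h1, zero_add]
    congr 1; ring
  · have h1 : ENNReal.ofReal (y - x - c) = 0 := ENNReal.ofReal_of_nonpos (by linarith)
    rw [abs_of_nonneg (sub_nonneg.mpr hxy), h1, add_zero]

lemma contr_abs (hab : a < b) (hmeas : Measurable g)
    (hbdd : ∀ u ∈ Set.Icc a b, |g u| ≤ C) (hmono : MonotoneOn h (Set.Icc a b))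
    {c : ℝ} (hc : 0 ≤ c) :
    ∫⁻ u, ENNReal.ofReal (|Pg a b C g u - Hc a b h u| - c) ∂(volume.restrict (Set.Ioo a b))
      ≤ ∫⁻ u, ENNReal.ofReal (|g u - Hc a b h u| - c) ∂(volume.restrict (Set.Ioo a b)) := by
  have hHc := Hc_measurable hab.le hmono
  have hPg := Pg_measurable hab hmeas hbdd
  calc ∫⁻ u, ENNReal.ofReal (|Pg a b C g u - Hc a b h u| - c) ∂(volume.restrict (Set.Ioo a b))
      = ∫⁻ u, (ENNReal.ofReal (Pg a b C g u - Hc a b h u - c)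
          + ENNReal.ofReal (Hc a b h u - Pg a b C g u - c)) ∂(volume.restrict (Set.Ioo a b)) := by
        apply lintegral_congr; intro u; exact ofReal_abs_split hc
    _ = (∫⁻ u, ENNReal.ofReal (Pg a b C g u - Hc a b h u - c) ∂(volume.restrict (Set.Ioo a b)))
          + ∫⁻ u, ENNReal.ofReal (Hc a b h u - Pg a b C g u - c)
            ∂(volume.restrict (Set.Ioo a b)) := by
        apply lintegral_add_left
        exact ((hPg.sub hHc).sub measurable_const).ennreal_ofReal
    _ ≤ (∫⁻ u, ENNReal.ofReal (g u - Hc a b h u - c) ∂(volume.restrict (Set.Ioo a b)))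
          + ∫⁻ u, ENNReal.ofReal (Hc a b h u - g u - c) ∂(volume.restrict (Set.Ioo a b)) :=
        add_le_add (contr_plus hab hmeas hbdd hmono c) (contr_minus hab hmeas hbdd hmono c)
    _ = ∫⁻ u, ENNReal.ofReal (|g u - Hc a b h u| - c) ∂(volume.restrict (Set.Ioo a b)) := by
        rw [← lintegral_add_left (f := fun u => ENNReal.ofReal (g u - Hc a b h u - c)) (((hmeas.sub hHc).sub measurable_const).ennreal_ofReal)]
        apply lintegral_congr; intro u; exact (ofReal_abs_split hc).symm

/-- layer-cake for the `p`-th power. -/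
lemma pow_layer {p : ℝ} (hp : 1 < p) {R : ℝ} (hR : 0 ≤ R) :
    ENNReal.ofReal (R ^ p) = ∫⁻ c in Set.Ioi (0:ℝ),
      ENNReal.ofReal (R - c) * ENNReal.ofReal (p * (p - 1) * c ^ (p - 2)) := by
  rcases eq_or_lt_of_le hR with hR0 | hR0
  · rw [← hR0, Real.zero_rpow (by positivity), ENNReal.ofReal_zero]
    rw [setLIntegral_congr_fun measurableSet_Ioi (fun c hc => ?_), lintegral_zero]
    rw [ENNReal.ofReal_of_nonpos (by simp only [Set.mem_Ioi] at hc; linarith), zero_mul]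
  · have hIoi : Set.Ioi (0:ℝ) = Set.Ioc 0 R ∪ Set.Ioi R := (Set.Ioc_union_Ioi_eq_Ioi hR).symm
    rw [hIoi, lintegral_union measurableSet_Ioi (Set.Ioc_disjoint_Ioi le_rfl)]
    have hzero : ∫⁻ c in Set.Ioi R,
        ENNReal.ofReal (R - c) * ENNReal.ofReal (p * (p - 1) * c ^ (p - 2)) ∂volume = 0 := by
      rw [setLIntegral_congr_fun measurableSet_Ioi (fun c hc => ?_), lintegral_zero]
      rw [ENNReal.ofReal_of_nonpos (by simp only [Set.mem_Ioi] at hc; linarith), zero_mul]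
    rw [hzero, add_zero]
    have hcongr : ∫⁻ c in Set.Ioc 0 R,
        ENNReal.ofReal (R - c) * ENNReal.ofReal (p * (p - 1) * c ^ (p - 2)) ∂volume
        = ∫⁻ c in Set.Ioc 0 R,
          ENNReal.ofReal ((R - c) * (p * (p - 1) * c ^ (p - 2))) ∂volume := by
      apply setLIntegral_congr_fun measurableSet_Ioc (fun c hc => ?_)
      simp only [Set.mem_Ioc] at hc
      exact (ENNReal.ofReal_mul (by linarith [hc.2] : (0:ℝ) ≤ R - c)).symm
    rw [hcongr]
    -- integrability
    have hint1 : IntegrableOn (fun c : ℝ => c ^ (p - 2)) (Set.Ioc 0 R) volume :=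
      (intervalIntegral.intervalIntegrable_rpow' (by linarith) (a := 0) (b := R)).1
    have hint2 : IntegrableOn (fun c : ℝ => c ^ (p - 1)) (Set.Ioc 0 R) volume :=
      (intervalIntegral.intervalIntegrable_rpow' (by linarith) (a := 0) (b := R)).1
    have heq : ∀ c ∈ Set.Ioc (0:ℝ) R, (R - c) * (p * (p - 1) * c ^ (p - 2))
        = p * (p - 1) * R * c ^ (p - 2) - p * (p - 1) * c ^ (p - 1) := by
      intro c hc
      have h3 : c ^ (p - 1) = c ^ (1 + (p - 2)) := by congr 1; ring
      rw [h3, Real.rpow_add hc.1, Real.rpow_one]; ring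
    have hintf : IntegrableOn (fun c : ℝ => (R - c) * (p * (p - 1) * c ^ (p - 2)))
        (Set.Ioc 0 R) volume := by
      apply ((hint1.const_mul (p * (p - 1) * R)).sub
        (hint2.const_mul (p * (p - 1)))).congr
      refine (ae_restrict_mem measurableSet_Ioc).mono (fun c hc => ?_)
      simp only [Pi.sub_apply]
      exact (heq c hc).symm
    have hnn : 0 ≤ᵐ[volume.restrict (Set.Ioc 0 R)]
        fun c : ℝ => (R - c) * (p * (p - 1) * c ^ (p - 2)) := by
      refine (ae_restrict_mem measurableSet_Ioc).mono (fun c hc => ?_)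
      have h1 : (0:ℝ) ≤ R - c := by linarith [hc.2]
      have h2 : (0:ℝ) ≤ c ^ (p - 2) := Real.rpow_nonneg hc.1.le _
      exact mul_nonneg h1 (mul_nonneg (by nlinarith) h2)
    rw [← ofReal_integral_eq_lintegral_ofReal hintf hnn]
    congr 1
    -- compute the real integral
    have hval : ∫ c in Set.Ioc 0 R, (R - c) * (p * (p - 1) * c ^ (p - 2))
        = ∫ c in Set.Ioc 0 R,
          (p * (p - 1) * R * c ^ (p - 2) - p * (p - 1) * c ^ (p - 1)) := by
      apply setIntegral_congr_fun measurableSet_Ioc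
      intro c hc
      exact heq c hc
    rw [hval]
    rw [integral_sub (hint1.const_mul _) (hint2.const_mul _)]
    rw [integral_const_mul, integral_const_mul]
    have hi1 : ∫ c in Set.Ioc 0 R, c ^ (p - 2) = R ^ (p - 1) / (p - 1) := by
      rw [← intervalIntegral.integral_of_le hR]
      rw [integral_rpow (Or.inl (by linarith))]
      rw [Real.zero_rpow (by linarith : p - 2 + 1 ≠ 0)]
      rw [show p - 2 + 1 = p - 1 by ring]
      norm_num
    have hi2 : ∫ c in Set.Ioc 0 R, c ^ (p - 1) = R ^ p / p := by
      rw [← intervalIntegral.integral_of_le hR]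
      rw [integral_rpow (Or.inl (by linarith))]
      rw [Real.zero_rpow (by linarith : p - 1 + 1 ≠ 0)]
      rw [show p - 1 + 1 = p by ring]
      norm_num
    rw [hi1, hi2]
    have hRp : R * R ^ (p - 1) = R ^ p := by
      rw [← Real.rpow_one_add' hR0.le (by linarith)]
      norm_num
    have hp1 : p - 1 ≠ 0 := by linarith
    have hpne : p ≠ 0 := by linarith
    have e1 : p * (p - 1) * R * (R ^ (p - 1) / (p - 1)) = p * R ^ p := by
      field_simp
      linear_combination hRp
    have e2 : p * (p - 1) * (R ^ p / p) = (p - 1) * R ^ p := by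
      field_simp
    rw [e1, e2]
    ring

lemma contr_pow (hab : a < b) (hmeas : Measurable g)
    (hbdd : ∀ u ∈ Set.Icc a b, |g u| ≤ C) (hmono : MonotoneOn h (Set.Icc a b))
    {p : ℝ} (hp : 1 ≤ p) :
    ∫⁻ u, ENNReal.ofReal (|Pg a b C g u - Hc a b h u| ^ p) ∂(volume.restrict (Set.Ioo a b))
      ≤ ∫⁻ u, ENNReal.ofReal (|g u - Hc a b h u| ^ p) ∂(volume.restrict (Set.Ioo a b)) := by
  have hHc := Hc_measurable hab.le hmono
  have hPg := Pg_measurable hab hmeas hbdd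
  rcases hp.eq_or_lt with hp1 | hp1
  · rw [← hp1]
    simp only [Real.rpow_one]
    simpa [sub_zero] using contr_abs hab hmeas hbdd hmono (le_refl (0:ℝ))
  · have hwm : Measurable (fun c : ℝ => ENNReal.ofReal (p * (p - 1) * c ^ (p - 2))) := by
      apply Measurable.ennreal_ofReal
      apply Measurable.const_mul
      apply measurable_of_continuousOn_compl_singleton (0:ℝ)
      intro x hx
      exact (Real.continuousAt_rpow_const x _ (Or.inl hx)).continuousWithinAt
    have rep : ∀ f : ℝ → ℝ, Measurable f →
        ∫⁻ u, ENNReal.ofReal (|f u| ^ p) ∂(volume.restrict (Set.Ioo a b))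
          = ∫⁻ c in Set.Ioi (0:ℝ), (∫⁻ u, ENNReal.ofReal (|f u| - c)
              ∂(volume.restrict (Set.Ioo a b)))
            * ENNReal.ofReal (p * (p - 1) * c ^ (p - 2)) ∂volume := by
      intro f hf
      have hprod : AEMeasurable (Function.uncurry fun (u c : ℝ) =>
          ENNReal.ofReal (|f u| - c) * ENNReal.ofReal (p * (p - 1) * c ^ (p - 2)))
          ((volume.restrict (Set.Ioo a b)).prod (volume.restrict (Set.Ioi (0:ℝ)))) := by
        apply Measurable.aemeasurable
        exact (((hf.abs.comp measurable_fst).sub measurable_snd).ennreal_ofReal).mul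
          (hwm.comp measurable_snd)
      calc ∫⁻ u, ENNReal.ofReal (|f u| ^ p) ∂(volume.restrict (Set.Ioo a b))
          = ∫⁻ u, ∫⁻ c in Set.Ioi (0:ℝ), ENNReal.ofReal (|f u| - c)
              * ENNReal.ofReal (p * (p - 1) * c ^ (p - 2)) ∂volume
              ∂(volume.restrict (Set.Ioo a b)) :=
            lintegral_congr fun u => pow_layer hp1 (abs_nonneg _)
        _ = ∫⁻ c in Set.Ioi (0:ℝ), ∫⁻ u, ENNReal.ofReal (|f u| - c)
              * ENNReal.ofReal (p * (p - 1) * c ^ (p - 2))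
              ∂(volume.restrict (Set.Ioo a b)) ∂volume :=
            lintegral_lintegral_swap hprod
        _ = ∫⁻ c in Set.Ioi (0:ℝ), (∫⁻ u, ENNReal.ofReal (|f u| - c)
              ∂(volume.restrict (Set.Ioo a b)))
            * ENNReal.ofReal (p * (p - 1) * c ^ (p - 2)) ∂volume := by
            apply lintegral_congr
            intro c
            exact lintegral_mul_const'' _
              (((hf.abs.sub measurable_const).ennreal_ofReal).aemeasurable)
    rw [rep (fun u => Pg a b C g u - Hc a b h u) (hPg.sub hHc), rep (fun u => g u - Hc a b h u) (hmeas.sub hHc)]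
    refine lintegral_mono_ae ((ae_restrict_mem measurableSet_Ioi).mono fun c hc => ?_)
    exact mul_le_mul_left (contr_abs hab hmeas hbdd hmono (le_of_lt hc)) _

end RECloser


/-- If `h` is nondecreasing (isotone) and right-continuous on `J = [a,b]` and `g` is any
bounded measurable function, then for every `p ≥ 1` the rearranged estimate `Φ(g)` is at
least as close to `h` in `L^p` as `g` is: `∫_J |Φ(g) − h|^p ≤ ∫_J |g − h|^p`. -/
theorem rearranged_estimate_closer (a b : ℝ) (hab : a ≤ b) (h g : ℝ → ℝ)
    (hmono : MonotoneOn h (Set.Icc a b))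
    (hrc : ∀ x ∈ Set.Icc a b, ContinuousWithinAt h (Set.Ici x) x)
    (hmeas : Measurable g) (C : ℝ) (hbdd : ∀ u ∈ Set.Icc a b, |g u| ≤ C)
    (p : ℝ) (hp : 1 ≤ p) :
    ∫ u in Set.Icc a b, |Phi a b g u - h u| ^ p
      ≤ ∫ u in Set.Icc a b, |g u - h u| ^ p := by
  open RECloser in
  rcases hab.eq_or_lt with rfl | hab'
  · have hz : volume.restrict (Set.Icc a a) = 0 := by
      rw [Measure.restrict_eq_zero, Set.Icc_self]
      exact measure_singleton a
    rw [hz]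
    simp
  · have hPgm := RECloser.Pg_measurable hab' hmeas hbdd
    have hHcm := RECloser.Hc_measurable hab'.le hmono
    have hpow_cont : Continuous fun x : ℝ => x ^ p :=
      continuous_iff_continuousAt.mpr fun x => Real.continuousAt_rpow_const x p
        (Or.inr (by linarith))
    have hnull : volume.restrict (Set.Icc a b) (Set.Ioo a b)ᶜ = 0 := by
      rw [Measure.restrict_apply measurableSet_Ioo.compl]
      have heq : (Set.Ioo a b)ᶜ ∩ Set.Icc a b = Set.Icc a b \ Set.Ioo a b := by
        rw [Set.diff_eq, Set.inter_comm]
      rw [heq, Set.Icc_diff_Ioo_same hab'.le]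
      exact (Set.to_countable _).measure_zero _
    have hmem : ∀ᵐ u ∂(volume.restrict (Set.Icc a b)), u ∈ Set.Ioo a b := by
      rw [Filter.eventually_iff, mem_ae_iff]
      exact hnull
    have hae1 : (fun u => |Phi a b g u - h u| ^ p) =ᵐ[volume.restrict (Set.Icc a b)]
        (fun u => |RECloser.Pg a b C g u - RECloser.Hc a b h u| ^ p) := by
      refine hmem.mono fun u hu => ?_
      show |Phi a b g u - h u| ^ p = |RECloser.Pg a b C g u - RECloser.Hc a b h u| ^ p
      rw [RECloser.Pg_eq_phi hu, RECloser.Hc_eq (Set.Ioo_subset_Icc_self hu)]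
    have hae2 : (fun u => |g u - h u| ^ p) =ᵐ[volume.restrict (Set.Icc a b)]
        (fun u => |g u - RECloser.Hc a b h u| ^ p) := by
      refine hmem.mono fun u hu => ?_
      show |g u - h u| ^ p = |g u - RECloser.Hc a b h u| ^ p
      rw [RECloser.Hc_eq (Set.Ioo_subset_Icc_self hu)]
    have hnn1 : 0 ≤ᵐ[volume.restrict (Set.Icc a b)] fun u => |Phi a b g u - h u| ^ p :=
      Filter.Eventually.of_forall fun u => Real.rpow_nonneg (abs_nonneg _) _
    have hnn2 : 0 ≤ᵐ[volume.restrict (Set.Icc a b)] fun u => |g u - h u| ^ p :=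
      Filter.Eventually.of_forall fun u => Real.rpow_nonneg (abs_nonneg _) _
    have hm1 : AEStronglyMeasurable (fun u => |Phi a b g u - h u| ^ p)
        (volume.restrict (Set.Icc a b)) :=
      ((hpow_cont.measurable.comp (hPgm.sub hHcm).abs).aestronglyMeasurable).congr hae1.symm
    have hm2 : AEStronglyMeasurable (fun u => |g u - h u| ^ p)
        (volume.restrict (Set.Icc a b)) :=
      ((hpow_cont.measurable.comp (hmeas.sub hHcm).abs).aestronglyMeasurable).congr hae2.symm
    rw [integral_eq_lintegral_of_nonneg_ae hnn1 hm1, integral_eq_lintegral_of_nonneg_ae hnn2 hm2]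
    have hL1 : ∫⁻ u, ENNReal.ofReal (|Phi a b g u - h u| ^ p) ∂(volume.restrict (Set.Icc a b))
        = ∫⁻ u, ENNReal.ofReal (|RECloser.Pg a b C g u - RECloser.Hc a b h u| ^ p)
            ∂(volume.restrict (Set.Ioo a b)) := by
      rw [← RECloser.restrict_Icc_eq]
      exact lintegral_congr_ae (hae1.mono fun u hu => by dsimp only at hu ⊢; rw [hu])
    have hL2 : ∫⁻ u, ENNReal.ofReal (|g u - h u| ^ p) ∂(volume.restrict (Set.Icc a b))
        = ∫⁻ u, ENNReal.ofReal (|g u - RECloser.Hc a b h u| ^ p)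
            ∂(volume.restrict (Set.Ioo a b)) := by
      rw [← RECloser.restrict_Icc_eq]
      exact lintegral_congr_ae (hae2.mono fun u hu => by dsimp only at hu ⊢; rw [hu])
    apply ENNReal.toReal_mono
    · -- finiteness of the right-hand side
      set B := C + max |h a| |h b| with hB
      have hbound : ∀ᵐ u ∂(volume.restrict (Set.Icc a b)),
          ENNReal.ofReal (|g u - h u| ^ p) ≤ ENNReal.ofReal (B ^ p) := by
        refine (ae_restrict_mem measurableSet_Icc).mono fun u hu => ?_
        apply ENNReal.ofReal_le_ofReal
        apply Real.rpow_le_rpow (abs_nonneg _) ?_ (by linarith)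
        calc |g u - h u| ≤ |g u| + |h u| := abs_sub _ _
          _ ≤ C + max |h a| |h b| := add_le_add (hbdd u hu)
              (abs_le_max_abs_abs (hmono (Set.left_mem_Icc.mpr hab'.le) hu hu.1)
                (hmono hu (Set.right_mem_Icc.mpr hab'.le) hu.2))
      refine ne_top_of_le_ne_top ?_ (le_trans (lintegral_mono_ae hbound)
        (le_of_eq (lintegral_const _)))
      exact ENNReal.mul_ne_top ENNReal.ofReal_ne_top
        (by rw [Measure.restrict_apply_univ]; exact measure_Icc_lt_top.ne)
    · rw [hL1, hL2]
      exact RECloser.contr_pow hab' hmeas hbdd hmono hp
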